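/- arXiv:1612.09368 — 6 statements merged into one kernel-verified Lean document; each statement's English description precedes it below -/
import Mathlib

section
/- Inserting a single edge <u,v> into a graph G increases the core number of any vertex by at most 1. -/
open SimpleGraph

/-- The core number of a vertex: the largest `k` such that the vertex lies in a
subgraph of `G` with minimum degree at least `k`. -/
noncomputable def coreNumber {V : Type*} (G : SimpleGraph V) (v : V) : ℕ :=
  sSup {k : ℕ | ∃ H : G.Subgraph, v ∈ H.verts ∧ ∀ w ∈ H.verts, k ≤ (H.neighborSet w).ncard}

lemma coreNumber_bddAbove {V : Type*} [Fintype V] (G : SimpleGraph V) (v : V) :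
    BddAbove {k : ℕ | ∃ H : G.Subgraph, v ∈ H.verts ∧
      ∀ w ∈ H.verts, k ≤ (H.neighborSet w).ncard} := by
  classical
  refine ⟨Fintype.card V, ?_⟩
  rintro k ⟨H, hv, hk⟩
  calc k ≤ (H.neighborSet v).ncard := hk v hv
    _ ≤ (Set.univ : Set V).ncard := Set.ncard_le_ncard (Set.subset_univ _) (Set.toFinite _)
    _ = Fintype.card V := by simp [Set.ncard_univ]

theorem coreNumber_insert_edge_le {V : Type*} [Fintype V] (G : SimpleGraph V) (u v : V)
    (huv : u ≠ v) (he : s(u,v) ∉ G.edgeSet) (w : V) :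
    coreNumber (G ⊔ fromEdgeSet {s(u,v)}) w ≤ coreNumber G w + 1 := by
  classical
  unfold coreNumber
  apply csSup_le
  · exact ⟨0, ⟨⟨{w}, ⊥, by simp, by simp, ⟨fun _ _ h => h⟩⟩, by simp, by simp⟩⟩
  rintro k ⟨H, hw, hk⟩
  -- restrict H to G
  set H' : G.Subgraph :=
    { verts := H.verts
      Adj := fun a b => H.Adj a b ∧ G.Adj a b
      adj_sub := fun h => h.2
      edge_vert := fun h => H.edge_vert h.1
      symm := ⟨fun a b h => ⟨H.adj_symm h.1, G.adj_symm h.2⟩⟩ } with hH'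
  have key : ∀ x, (H.neighborSet x).ncard ≤ (H'.neighborSet x).ncard + 1 := by
    intro x
    have hsub : H.neighborSet x ⊆ insert (if x = u then v else u) (H'.neighborSet x) := by
      intro y hy
      have hadj : (G ⊔ fromEdgeSet {s(u,v)}).Adj x y := H.adj_sub hy
      rcases hadj with hG | hE
      · exact Set.mem_insert_of_mem _ ⟨hy, hG⟩
      · have h3 : s(x,y) = s(u,v) := hE.1
        rw [Sym2.eq_iff] at h3
        rcases h3 with ⟨hxu, hyv⟩ | ⟨hxv, hyu⟩
        · simp [hxu, hyv]
        · have : x ≠ u := by rw [hxv]; exact huv.symm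
          simp [this, hyu]
    calc (H.neighborSet x).ncard ≤ (insert (if x = u then v else u) (H'.neighborSet x)).ncard :=
          Set.ncard_le_ncard hsub (Set.toFinite _)
      _ ≤ (H'.neighborSet x).ncard + 1 := Set.ncard_insert_le _ _
  have hmem : k - 1 ∈ {m : ℕ | ∃ K : G.Subgraph, w ∈ K.verts ∧
      ∀ x ∈ K.verts, m ≤ (K.neighborSet x).ncard} := by
    refine ⟨H', hw, fun x hx => ?_⟩
    have h1 := hk x hx
    have h2 := key x
    omega
  have := le_csSup (coreNumber_bddAbove G w) hmem
  omega
end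

section
/- Deleting a single edge <u,v> from a graph G decreases the core number of any vertex by at most 1. -/
open SimpleGraph

theorem coreNumber_delete_edge_ge {V : Type*} [Fintype V] (G : SimpleGraph V) (u v : V)
    (he : s(u,v) ∈ G.edgeSet) (w : V) :
    coreNumber G w ≤ coreNumber (G.deleteEdges {s(u,v)}) w + 1 := by
  classical
  have huv : u ≠ v := (G.mem_edgeSet.mp he).ne
  set G' := G.deleteEdges {s(u,v)} with hG'
  set S' := {k : ℕ | ∃ H : G'.Subgraph, w ∈ H.verts ∧
      ∀ x ∈ H.verts, k ≤ (H.neighborSet x).ncard} with hS'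
  have hbdd : BddAbove S' := by
    refine ⟨Fintype.card V, ?_⟩
    rintro k ⟨H, hw, hk⟩
    calc k ≤ (H.neighborSet w).ncard := hk w hw
      _ ≤ (Set.univ : Set V).ncard := Set.ncard_le_ncard (Set.subset_univ _) Set.finite_univ
      _ = Fintype.card V := by simp [Set.ncard_univ]
  have hne : {k : ℕ | ∃ H : G.Subgraph, w ∈ H.verts ∧
      ∀ x ∈ H.verts, k ≤ (H.neighborSet x).ncard}.Nonempty :=
    ⟨0, ⊤, by simp, fun x _ => Nat.zero_le _⟩
  refine csSup_le hne ?_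
  rintro k ⟨H, hw, hk⟩
  let H' : G'.Subgraph :=
    { verts := H.verts
      Adj := fun a b => H.Adj a b ∧ s(a,b) ≠ s(u,v)
      adj_sub := by
        rintro a b ⟨hab, hnab⟩
        rw [hG', SimpleGraph.deleteEdges_adj]
        exact ⟨H.adj_sub hab, by simpa using hnab⟩
      edge_vert := fun h => H.edge_vert h.1
      symm := ⟨fun a b ⟨hab, hnab⟩ => ⟨hab.symm, by rwa [Sym2.eq_swap]⟩⟩ }
  have key : ∀ x, (H.neighborSet x).ncard ≤ (H'.neighborSet x).ncard + 1 := by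
    intro x
    set c : V := if x = u then v else u with hc
    have hsub : H.neighborSet x ⊆ insert c (H'.neighborSet x) := by
      intro b hb
      by_cases hs : s(x,b) = s(u,v)
      · rcases Sym2.eq_iff.mp hs with ⟨hx, hbv⟩ | ⟨hx, hbu⟩
        · left; simp [hc, hx, hbv]
        · left
          have : x ≠ u := by rw [hx]; exact huv.symm
          simp [hc, this, hbu]
      · right; exact ⟨hb, hs⟩
    calc (H.neighborSet x).ncard ≤ (insert c (H'.neighborSet x)).ncard :=
          Set.ncard_le_ncard hsub (Set.toFinite _)
      _ ≤ (H'.neighborSet x).ncard + 1 := Set.ncard_insert_le _ _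
  have hmem : k - 1 ∈ S' := by
    refine ⟨H', hw, fun x hx => ?_⟩
    have h1 := hk x hx
    have h2 := key x
    omega
  have h3 := le_csSup hbdd hmem
  have h4 : coreNumber G' w = sSup S' := rfl
  omega
end

section
/- If a k-superior edge set E_k is deleted from a graph G, then for every vertex v with core_G(v) = k, the core number of v decreases by at most 1, and for every vertex v with core_G(v) ≠ k, the core number of v does not change. -/
open SimpleGraph

/-- `S` is a `k`-superior edge set of existing edges of `G`. -/
def IsKSuperiorDeleteSet {V : Type*} (G : SimpleGraph V) (k : ℕ) (S : Set (Sym2 V)) : Prop :=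
  (∀ e ∈ S, e ∈ G.edgeSet ∧ ∃ u v : V, e = s(u,v) ∧
      coreNumber G u = k ∧ coreNumber G u ≤ coreNumber G v) ∧
  ∀ e₁ ∈ S, ∀ e₂ ∈ S, e₁ ≠ e₂ → ∀ u : V, u ∈ e₁ → u ∈ e₂ → k < coreNumber G u

section aux

variable {V : Type*}

lemma coreSet_nonempty (G : SimpleGraph V) (v : V) :
    {k : ℕ | ∃ H : G.Subgraph, v ∈ H.verts ∧
      ∀ w ∈ H.verts, k ≤ (H.neighborSet w).ncard}.Nonempty :=
  ⟨0, G.singletonSubgraph v, Set.mem_singleton v, fun _ _ => Nat.zero_le _⟩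

lemma coreSet_bddAbove [Fintype V] (G : SimpleGraph V) (v : V) :
    BddAbove {k : ℕ | ∃ H : G.Subgraph, v ∈ H.verts ∧
      ∀ w ∈ H.verts, k ≤ (H.neighborSet w).ncard} := by
  refine ⟨Fintype.card V, ?_⟩
  rintro m ⟨H, hv, hd⟩
  calc m ≤ (H.neighborSet v).ncard := hd v hv
    _ ≤ (Set.univ : Set V).ncard :=
      Set.ncard_le_ncard (Set.subset_univ _) Set.finite_univ
    _ = Fintype.card V := by simp [Set.ncard_univ]

lemma le_coreNumber [Fintype V] {G : SimpleGraph V} {v : V} {c : ℕ}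
    (H : G.Subgraph) (hv : v ∈ H.verts)
    (hd : ∀ w ∈ H.verts, c ≤ (H.neighborSet w).ncard) :
    c ≤ coreNumber G v :=
  le_csSup (coreSet_bddAbove G v) ⟨H, hv, hd⟩

lemma coreNumber_witness [Fintype V] (G : SimpleGraph V) (v : V) :
    ∃ H : G.Subgraph, v ∈ H.verts ∧
      ∀ w ∈ H.verts, coreNumber G v ≤ (H.neighborSet w).ncard :=
  Nat.sSup_mem (coreSet_nonempty G v) (coreSet_bddAbove G v)

lemma coreNumber_deleteEdges_le [Fintype V] (G : SimpleGraph V) (S : Set (Sym2 V)) (v : V) :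
    coreNumber (G.deleteEdges S) v ≤ coreNumber G v := by
  apply csSup_le (coreSet_nonempty _ v)
  rintro m ⟨H, hv, hd⟩
  refine le_coreNumber ⟨H.verts, H.Adj, ?_, H.edge_vert, H.symm⟩ hv hd
  intro a b hab
  exact ((G.deleteEdges_adj ..).1 (H.adj_sub hab)).1

/-- The key lemma: after deletion, every vertex retains core number at least
`coreNumber G w - 1` if its core is `k`, and `coreNumber G w` otherwise. -/
lemma coreNumber_deleteEdges_ge [Fintype V] (G : SimpleGraph V) (k : ℕ) (S : Set (Sym2 V))
    (hS : IsKSuperiorDeleteSet G k S) (v : V) :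
    (if coreNumber G v = k then k - 1 else coreNumber G v)
      ≤ coreNumber (G.deleteEdges S) v := by
  classical
  set f : V → ℕ := fun w => if coreNumber G w = k then k - 1 else coreNumber G w with hf
  set c : ℕ := f v with hc
  -- the induced subgraph of G.deleteEdges S on {w | c ≤ f w}
  refine le_coreNumber
    (⟨{w | c ≤ f w}, fun a b => (G.deleteEdges S).Adj a b ∧ c ≤ f a ∧ c ≤ f b,
      fun h => h.1, fun h => h.2.1, ⟨fun a b h => ⟨h.1.symm, h.2.2, h.2.1⟩⟩⟩ :
      (G.deleteEdges S).Subgraph) (le_refl c) ?_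
  intro w hw
  simp only [Set.mem_setOf_eq] at hw
  -- witness subgraph for w in G
  obtain ⟨H, hwH, hdeg⟩ := coreNumber_witness G w
  set j : ℕ := coreNumber G w with hj
  -- every vertex of H has core number ≥ j
  have hcore : ∀ x ∈ H.verts, j ≤ coreNumber G x := fun x hx =>
    le_coreNumber H hx hdeg
  -- hence f x ≥ f w for vertices of H
  have hfH : ∀ x ∈ H.verts, f w ≤ f x := by
    intro x hx
    have hjx := hcore x hx
    simp only [hf]
    split_ifs with h1 h2 h3
    · omega
    · -- core w = k, core x ≠ k : core x ≥ k so core x ≥ k > k-1... need k-1 ≤ core x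
      omega
    · -- core w ≠ k, core x = k : j ≠ k and k = core x ≥ j so k > j, k-1 ≥ j
      omega
    · omega
  set N : Set V := H.neighborSet w with hN
  have hNsub : ∀ x ∈ N, x ∈ H.verts := fun x hx => H.edge_vert hx.symm
  have hNadj : ∀ x ∈ N, G.Adj w x := fun x hx => H.adj_sub hx
  have hNcard : j ≤ N.ncard := hdeg w hwH
  set N' : Set V := {x ∈ N | s(w,x) ∉ S} with hN'
  -- N' is contained in the neighbor set of w in the constructed subgraph
  have hsub : N' ⊆ {x | ((G.deleteEdges S).Adj w x ∧ c ≤ f w ∧ c ≤ f x)} := by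
    rintro x ⟨hxN, hxS⟩
    refine ⟨(G.deleteEdges_adj ..).2 ⟨hNadj x hxN, hxS⟩, hw, le_trans hw (hfH x (hNsub x hxN))⟩
  have hmain : c ≤ N'.ncard := by
    by_cases hjk : j = k
    · -- at most one incident deleted edge
      have hbad : {x ∈ N | s(w,x) ∈ S}.Subsingleton := by
        rintro x₁ ⟨hx₁, hs₁⟩ x₂ ⟨hx₂, hs₂⟩
        by_contra hne
        have hedge : s(w, x₁) ≠ s(w, x₂) := by
          intro heq
          rcases Sym2.eq_iff.mp heq with ⟨-, h⟩ | ⟨h1, h2⟩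
          · exact hne h
          · exact hne (h2.trans h1)
        have := hS.2 _ hs₁ _ hs₂ hedge w (Sym2.mem_mk_left _ _) (Sym2.mem_mk_left _ _)
        omega
      have hbadcard : {x ∈ N | s(w,x) ∈ S}.ncard ≤ 1 := by
        rcases hbad.eq_empty_or_singleton with h | ⟨x, h⟩
        · simp [h]
        · simp [h]
      have hcover : N ⊆ N' ∪ {x ∈ N | s(w,x) ∈ S} := by
        intro x hx
        by_cases hxS : s(w,x) ∈ S
        · exact Or.inr ⟨hx, hxS⟩
        · exact Or.inl ⟨hx, hxS⟩
      have hNle : N.ncard ≤ N'.ncard + {x ∈ N | s(w,x) ∈ S}.ncard :=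
        le_trans (Set.ncard_le_ncard hcover (Set.toFinite _)) (Set.ncard_union_le _ _)
      have hcw : c ≤ k - 1 := by
        have : f w = k - 1 := by simp [hf, ← hj, hjk]
        omega
      omega
    · -- no incident deleted edge: N' = N
      have hNN : N' = N := by
        ext x
        simp only [hN', Set.mem_sep_iff, and_iff_left_iff_imp]
        intro hxN hxS
        obtain ⟨-, u, y, hey, hcu, hcuy⟩ := hS.1 _ hxS
        have hx := hcore x (hNsub x hxN)
        rw [Sym2.eq_iff] at hey
        rcases hey with ⟨hw1, hx1⟩ | ⟨hw1, hx1⟩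
        · -- w = u, x = y : core w = k, contra j ≠ k
          exact hjk (by rw [hj, hw1, hcu])
        · -- w = y, x = u : core x = k, core w ≥ k so j ≥ k; j ≠ k so j > k; core x ≥ j > k contra
          have h1 : coreNumber G x = k := by rw [hx1, hcu]
          have h2 : k ≤ coreNumber G w := by rw [← hw1] at hcuy; omega
          omega
      have hcw : c ≤ j := by
        have : f w = j := by simp [hf, ← hj, hjk]
        omega
      rw [hNN]; omega
  calc c ≤ N'.ncard := hmain
    _ ≤ _ := Set.ncard_le_ncard hsub (Set.toFinite _)

end aux

theorem kSuperiorDelete_core_change {V : Type*} [Fintype V] (G : SimpleGraph V)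
    (k : ℕ) (S : Set (Sym2 V)) (hS : IsKSuperiorDeleteSet G k S) (v : V) :
    (coreNumber G v = k → coreNumber G v ≤ coreNumber (G.deleteEdges S) v + 1) ∧
    (coreNumber G v ≠ k → coreNumber (G.deleteEdges S) v = coreNumber G v) := by
  have hge := coreNumber_deleteEdges_ge G k S hS v
  have hle := coreNumber_deleteEdges_le G S v
  constructor
  · intro h
    rw [if_pos h] at hge
    omega
  · intro h
    rw [if_neg h] at hge
    omega
end

section
/- In any superior edge set, each vertex is an endpoint of at most one edge that is a superior edge for it (i.e., each vertex u is incident to at most one edge <u,v> in the set with core_G(v) ≥ core_G(u)). -/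
open SimpleGraph

/-- `S` is a `k`-superior edge set with respect to `G` (edges may or may not be in `G`). -/
def IsKSuperiorEdgeSet {V : Type*} (G : SimpleGraph V) (k : ℕ) (S : Set (Sym2 V)) : Prop :=
  (∀ e ∈ S, ∃ u v : V, e = s(u,v) ∧
      coreNumber G u = k ∧ coreNumber G u ≤ coreNumber G v) ∧
  ∀ e₁ ∈ S, ∀ e₂ ∈ S, e₁ ≠ e₂ → ∀ u : V, u ∈ e₁ → u ∈ e₂ → k < coreNumber G u

lemma core_eq_of_mem_kset {V : Type*} (G : SimpleGraph V) (k : ℕ) (S : Set (Sym2 V))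
    (hS : IsKSuperiorEdgeSet G k S) (e : Sym2 V) (he : e ∈ S) (u v : V)
    (heq : e = s(u,v)) (hle : coreNumber G u ≤ coreNumber G v) :
    coreNumber G u = k := by
  obtain ⟨a, b, hab, hka, hab'⟩ := hS.1 e he
  rw [heq, Sym2.eq_iff] at hab
  rcases hab with ⟨rfl, rfl⟩ | ⟨rfl, rfl⟩
  · exact hka
  · omega

theorem superiorEdgeSet_at_most_one_superior_edge {V : Type*} [Fintype V] (G : SimpleGraph V)
    (ks : Finset ℕ) (F : ℕ → Set (Sym2 V))
    (hF : ∀ k ∈ ks, IsKSuperiorEdgeSet G k (F k))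
    (S : Set (Sym2 V)) (hS : S = ⋃ k ∈ ks, F k) :
    ∀ u : V, ∀ e₁ ∈ S, ∀ e₂ ∈ S,
      (∃ v : V, e₁ = s(u,v) ∧ coreNumber G u ≤ coreNumber G v) →
      (∃ v : V, e₂ = s(u,v) ∧ coreNumber G u ≤ coreNumber G v) →
      e₁ = e₂ := by
  intro u e₁ he₁ e₂ he₂ ⟨v₁, h1, hle1⟩ ⟨v₂, h2, hle2⟩
  subst hS
  simp only [Set.mem_iUnion] at he₁ he₂
  obtain ⟨k₁, hk₁, he₁⟩ := he₁
  obtain ⟨k₂, hk₂, he₂⟩ := he₂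
  have c1 := core_eq_of_mem_kset G k₁ (F k₁) (hF k₁ hk₁) e₁ he₁ u v₁ h1 hle1
  have c2 := core_eq_of_mem_kset G k₂ (F k₂) (hF k₂ hk₂) e₂ he₂ u v₂ h2 hle2
  have hk : k₁ = k₂ := by omega
  subst hk
  by_contra hne
  have := (hF k₁ hk₁).2 e₁ he₁ e₂ he₂ hne u
    (h1 ▸ Sym2.mem_mk_left u v₁) (h2 ▸ Sym2.mem_mk_left u v₂)
  omega
end

section
/- If inserting a single edge <u,v> into G with core_G(u) ≤ core_G(v) changes the core number of some vertex w, then core_G(w) = core_G(u). -/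
open SimpleGraph

section Aux

variable {V : Type*} [Fintype V]

/-- The set whose supremum is the core number. -/
def coreSet (G : SimpleGraph V) (v : V) : Set ℕ :=
  {k : ℕ | ∃ H : G.Subgraph, v ∈ H.verts ∧ ∀ w ∈ H.verts, k ≤ (H.neighborSet w).ncard}

lemma coreNumber_def (G : SimpleGraph V) (v : V) : coreNumber G v = sSup (coreSet G v) := rfl

lemma zero_mem_coreSet (G : SimpleGraph V) (v : V) : 0 ∈ coreSet G v :=
  ⟨SimpleGraph.singletonSubgraph G v, by simp [SimpleGraph.singletonSubgraph], fun _ _ => Nat.zero_le _⟩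

lemma coreSet_bddAbove_s14 (G : SimpleGraph V) (v : V) : BddAbove (coreSet G v) := by
  refine ⟨Fintype.card V, fun k hk => ?_⟩
  obtain ⟨H, hv, hdeg⟩ := hk
  refine (hdeg v hv).trans ?_
  calc (H.neighborSet v).ncard ≤ (Set.univ : Set V).ncard :=
        Set.ncard_le_ncard (Set.subset_univ _) Set.finite_univ
    _ = Fintype.card V := by simp [Set.ncard_univ, Nat.card_eq_fintype_card]

lemma coreNumber_mem (G : SimpleGraph V) (v : V) : coreNumber G v ∈ coreSet G v :=
  Nat.sSup_mem ⟨0, zero_mem_coreSet G v⟩ (coreSet_bddAbove_s14 G v)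

lemma le_coreNumber_s14 (G : SimpleGraph V) (v : V) {k : ℕ} (hk : k ∈ coreSet G v) :
    k ≤ coreNumber G v :=
  le_csSup (coreSet_bddAbove_s14 G v) hk

lemma coreNumber_le (G : SimpleGraph V) (v : V) {m : ℕ}
    (h : ∀ k ∈ coreSet G v, k ≤ m) : coreNumber G v ≤ m :=
  csSup_le ⟨0, zero_mem_coreSet G v⟩ h

/-- Transfer a subgraph along `G ≤ G'`. -/
def Subgraph.ofLE {G G' : SimpleGraph V} (h : G ≤ G') (H : G.Subgraph) : G'.Subgraph where
  verts := H.verts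
  Adj := H.Adj
  adj_sub ha := h (H.adj_sub ha)
  edge_vert := H.edge_vert
  symm := H.symm

lemma coreNumber_mono {G G' : SimpleGraph V} (h : G ≤ G') (v : V) :
    coreNumber G v ≤ coreNumber G' v := by
  refine coreNumber_le G v fun k hk => ?_
  obtain ⟨H, hv, hdeg⟩ := hk
  exact le_coreNumber_s14 G' v ⟨Subgraph.ofLE h H, hv, hdeg⟩

end Aux

section Main

variable {V : Type*} [Fintype V] (G : SimpleGraph V) (u v : V)

/-- Delete the edge `s(u,v)` from a subgraph of `G ⊔ fromEdgeSet {s(u,v)}`, landing in `G`. -/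
def dropEdge (H : (G ⊔ fromEdgeSet {s(u,v)}).Subgraph) : G.Subgraph where
  verts := H.verts
  Adj a b := H.Adj a b ∧ s(a,b) ≠ s(u,v)
  adj_sub := by
    rintro a b ⟨ha, hne⟩
    rcases H.adj_sub ha with h | h
    · exact h
    · exact absurd ((fromEdgeSet_adj _).1 h).1 (by simpa using hne)
  edge_vert h := H.edge_vert h.1
  symm := ⟨fun a b h => ⟨H.adj_symm h.1, by rw [Sym2.eq_swap]; exact h.2⟩⟩

lemma dropEdge_neighborSet_of_ne (H : (G ⊔ fromEdgeSet {s(u,v)}).Subgraph) {x : V}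
    (hxu : x ≠ u) (hxv : x ≠ v) :
    (dropEdge G u v H).neighborSet x = H.neighborSet x := by
  ext y
  simp only [Subgraph.mem_neighborSet, dropEdge, and_iff_left_iff_imp]
  intro _ hs
  rw [Sym2.eq_iff] at hs
  rcases hs with ⟨h1, _⟩ | ⟨h1, _⟩
  · exact hxu h1
  · exact hxv h1

lemma dropEdge_neighborSet_u (H : (G ⊔ fromEdgeSet {s(u,v)}).Subgraph) :
    H.neighborSet u \ {v} ⊆ (dropEdge G u v H).neighborSet u := by
  rintro y ⟨hy, hyv⟩
  refine ⟨hy, fun hs => ?_⟩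
  rw [Sym2.eq_iff] at hs
  rcases hs with ⟨_, h2⟩ | ⟨h1, h2⟩
  · exact hyv h2
  · exact hyv (h2.trans h1)

lemma dropEdge_neighborSet_v (H : (G ⊔ fromEdgeSet {s(u,v)}).Subgraph) :
    H.neighborSet v \ {u} ⊆ (dropEdge G u v H).neighborSet v := by
  rintro y ⟨hy, hyu⟩
  refine ⟨hy, fun hs => ?_⟩
  rw [Sym2.eq_iff] at hs
  rcases hs with ⟨h1, h2⟩ | ⟨_, h2⟩
  · exact hyu (h2.trans h1)
  · exact hyu h2

lemma ncard_diff_singleton_ge (s : Set V) (a : V) : s.ncard - 1 ≤ (s \ {a}).ncard := by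
  have h1 : s.ncard ≤ (s \ {a}).ncard + 1 := by
    calc s.ncard ≤ ((s \ {a}) ∪ {a}).ncard :=
          Set.ncard_le_ncard (fun x hx => by
            by_cases hxa : x = a
            · exact Or.inr (by simp [hxa])
            · exact Or.inl ⟨hx, hxa⟩) (Set.toFinite _)
      _ ≤ (s \ {a}).ncard + ({a} : Set V).ncard := Set.ncard_union_le _ _
      _ = (s \ {a}).ncard + 1 := by simp
  omega

/-- Degrees in the drop: everyone keeps degree `m` except `u, v` who keep `m - 1`. -/
lemma dropEdge_degree {m : ℕ} (H : (G ⊔ fromEdgeSet {s(u,v)}).Subgraph)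
    (hdeg : ∀ x ∈ H.verts, m ≤ (H.neighborSet x).ncard) :
    ∀ x ∈ (dropEdge G u v H).verts, m - 1 ≤ ((dropEdge G u v H).neighborSet x).ncard := by
  intro x hx
  by_cases hxu : x = u
  · subst hxu
    calc m - 1 ≤ (H.neighborSet x).ncard - 1 := by have := hdeg x hx; omega
      _ ≤ (H.neighborSet x \ {v}).ncard := ncard_diff_singleton_ge _ _
      _ ≤ _ := Set.ncard_le_ncard (dropEdge_neighborSet_u G x v H) (Set.toFinite _)
  · by_cases hxv : x = v
    · subst hxv
      calc m - 1 ≤ (H.neighborSet x).ncard - 1 := by have := hdeg x hx; omega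
        _ ≤ (H.neighborSet x \ {u}).ncard := ncard_diff_singleton_ge _ _
        _ ≤ _ := Set.ncard_le_ncard (dropEdge_neighborSet_v G u x H) (Set.toFinite _)
    · rw [dropEdge_neighborSet_of_ne G u v H hxu hxv]
      have := hdeg x hx
      omega

lemma dropEdge_degree_of_ne {m : ℕ} (H : (G ⊔ fromEdgeSet {s(u,v)}).Subgraph)
    (hdeg : ∀ x ∈ H.verts, m ≤ (H.neighborSet x).ncard) {x : V}
    (hx : x ∈ (dropEdge G u v H).verts) (hxu : x ≠ u) (hxv : x ≠ v) :
    m ≤ ((dropEdge G u v H).neighborSet x).ncard := by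
  rw [dropEdge_neighborSet_of_ne G u v H hxu hxv]
  exact hdeg x hx

/-- If the subgraph has no `u`–`v` edge, it drops without losing anything. -/
lemma dropEdge_neighborSet_of_not_adj (H : (G ⊔ fromEdgeSet {s(u,v)}).Subgraph)
    (hnadj : ¬ H.Adj u v) (x : V) :
    (dropEdge G u v H).neighborSet x = H.neighborSet x := by
  ext y
  simp only [Subgraph.mem_neighborSet, dropEdge, and_iff_left_iff_imp]
  intro hxy hs
  rw [Sym2.eq_iff] at hs
  rcases hs with ⟨h1, h2⟩ | ⟨h1, h2⟩
  · exact hnadj (h1 ▸ h2 ▸ hxy)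
  · exact hnadj (H.adj_symm (h1 ▸ h2 ▸ hxy))

lemma neighborSet_sup_left {G : SimpleGraph V} (H K : G.Subgraph) (x : V) :
    H.neighborSet x ⊆ (H ⊔ K).neighborSet x := fun _ h => Or.inl h

lemma neighborSet_sup_right {G : SimpleGraph V} (H K : G.Subgraph) (x : V) :
    K.neighborSet x ⊆ (H ⊔ K).neighborSet x := fun _ h => Or.inr h

end Main

theorem insert_edge_core_change_only_at_core_u {V : Type*} [Fintype V] (G : SimpleGraph V)
    (u v : V) (huv : u ≠ v) (he : s(u,v) ∉ G.edgeSet)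
    (hcore : coreNumber G u ≤ coreNumber G v) (w : V)
    (hw : coreNumber (G ⊔ fromEdgeSet {s(u,v)}) w ≠ coreNumber G w) :
    coreNumber G w = coreNumber G u := by
  set G' := G ⊔ fromEdgeSet {s(u,v)} with hG'
  set k := coreNumber G w with hk
  set c := coreNumber G u with hc
  have hmono : k ≤ coreNumber G' w := coreNumber_mono le_sup_left w
  have hlt : k + 1 ≤ coreNumber G' w := lt_of_le_of_ne hmono (Ne.symm hw)
  -- Step B : k ≤ c
  have hkc : k ≤ c := by
    have hB : ∀ k' ∈ coreSet G' w, k' ≤ max k (c + 1) := by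
      intro k' hk'
      obtain ⟨H, hwH, hdeg⟩ := hk'
      by_cases hadj : H.Adj u v
      · -- u ∈ H.verts; drop the edge to get a witness for c ≥ k' - 1
        refine le_max_of_le_right ?_
        have huH : u ∈ (dropEdge G u v H).verts := H.edge_vert hadj
        have : k' - 1 ∈ coreSet G u :=
          ⟨dropEdge G u v H, huH, dropEdge_degree G u v H hdeg⟩
        have := le_coreNumber_s14 G u this
        omega
      · -- no u-v edge: H is essentially a subgraph of G
        refine le_max_of_le_left ?_
        refine le_coreNumber_s14 G w ⟨dropEdge G u v H, hwH, fun x hx => ?_⟩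
        rw [dropEdge_neighborSet_of_not_adj G u v H hadj]
        exact hdeg x hx
    have := coreNumber_le G' w hB
    omega
  -- Step C : c ≤ k
  have hck : c ≤ k := by
    by_contra hlt'
    push_neg at hlt'
    -- so k + 1 ≤ c
    have hk1c : k + 1 ≤ c := hlt'
    obtain ⟨H, hwH, hdeg⟩ := coreNumber_mem G' w
    have hadj : H.Adj u v := by
      by_contra hnadj
      have : coreNumber G' w ∈ coreSet G w := by
        refine ⟨dropEdge G u v H, hwH, fun x hx => ?_⟩
        rw [dropEdge_neighborSet_of_not_adj G u v H hnadj]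
        exact hdeg x hx
      have := le_coreNumber_s14 G w this
      omega
    -- drop the edge
    set H1 := dropEdge G u v H with hH1
    obtain ⟨Ku, huKu, hdegKu⟩ := coreNumber_mem G u
    obtain ⟨Kv, hvKv, hdegKv⟩ := coreNumber_mem G v
    set L := H1 ⊔ Ku ⊔ Kv with hL
    have hKuL : ∀ x ∈ Ku.verts, k + 1 ≤ (L.neighborSet x).ncard := by
      intro x hx
      calc k + 1 ≤ c := hk1c
        _ ≤ (Ku.neighborSet x).ncard := hdegKu x hx
        _ ≤ ((H1 ⊔ Ku).neighborSet x).ncard :=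
            Set.ncard_le_ncard (neighborSet_sup_right _ _ _) (Set.toFinite _)
        _ ≤ (L.neighborSet x).ncard :=
            Set.ncard_le_ncard (neighborSet_sup_left _ _ _) (Set.toFinite _)
    have hKvL : ∀ x ∈ Kv.verts, k + 1 ≤ (L.neighborSet x).ncard := by
      intro x hx
      calc k + 1 ≤ c := hk1c
        _ ≤ coreNumber G v := hcore
        _ ≤ (Kv.neighborSet x).ncard := hdegKv x hx
        _ ≤ (L.neighborSet x).ncard :=
            Set.ncard_le_ncard (neighborSet_sup_right _ _ _) (Set.toFinite _)
    have hmem : k + 1 ∈ coreSet G w := by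
      refine ⟨L, Or.inl (Or.inl hwH), fun x hx => ?_⟩
      rcases hx with (hx | hx) | hx
      · -- x ∈ H1.verts
        by_cases hxu : x = u
        · exact hKuL x (hxu ▸ huKu)
        · by_cases hxv : x = v
          · exact hKvL x (hxv ▸ hvKv)
          · calc k + 1 ≤ coreNumber G' w := hlt
              _ ≤ (H1.neighborSet x).ncard :=
                  dropEdge_degree_of_ne G u v H hdeg hx hxu hxv
              _ ≤ ((H1 ⊔ Ku).neighborSet x).ncard :=
                  Set.ncard_le_ncard (neighborSet_sup_left _ _ _) (Set.toFinite _)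
              _ ≤ (L.neighborSet x).ncard :=
                  Set.ncard_le_ncard (neighborSet_sup_left _ _ _) (Set.toFinite _)
      · exact hKuL x hx
      · exact hKvL x hx
    have := le_coreNumber_s14 G w hmem
    omega
  omega
end

section
/- Let G' be obtained from G by inserting a set S of new edges, and let Δ_I be the maximum number of edges of S incident to any single vertex. Then for every vertex v, core_{G'}(v) ≤ core_G(v) + Δ_I. -/
open SimpleGraph

theorem coreNumber_insert_set_le {V : Type*} [Fintype V] (G : SimpleGraph V)
    (S : Set (Sym2 V)) (hSE : ∀ e ∈ S, e ∉ G.edgeSet) (D : ℕ)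
    (hD : ∀ v : V, {e ∈ S | v ∈ e}.ncard ≤ D) (v : V) :
    coreNumber (G ⊔ fromEdgeSet S) v ≤ coreNumber G v + D := by
  classical
  have hne : {k : ℕ | ∃ H : (G ⊔ fromEdgeSet S).Subgraph, v ∈ H.verts ∧
      ∀ w ∈ H.verts, k ≤ (H.neighborSet w).ncard}.Nonempty := by
    exact ⟨0, SimpleGraph.singletonSubgraph _ v, by simp, fun w _ => Nat.zero_le _⟩
  have hbdd : BddAbove {k : ℕ | ∃ H : G.Subgraph, v ∈ H.verts ∧
      ∀ w ∈ H.verts, k ≤ (H.neighborSet w).ncard} := by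
    refine ⟨Fintype.card V, fun k hk => ?_⟩
    obtain ⟨H, hv, hdeg⟩ := hk
    calc k ≤ (H.neighborSet v).ncard := hdeg v hv
      _ ≤ (Set.univ : Set V).ncard := Set.ncard_le_ncard (Set.subset_univ _) (Set.finite_univ)
      _ = Fintype.card V := by simp [Set.ncard_univ]
  apply csSup_le hne
  rintro k ⟨H, hv, hdeg⟩
  -- build a subgraph of G by deleting S-edges
  set B : V → Set V := fun a => {b | s(a, b) ∈ S} with hB
  have key : k - D ∈ {k : ℕ | ∃ H : G.Subgraph, v ∈ H.verts ∧
      ∀ w ∈ H.verts, k ≤ (H.neighborSet w).ncard} := by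
    refine ⟨{ verts := H.verts
              Adj := fun a b => H.Adj a b ∧ s(a, b) ∉ S
              adj_sub := ?_
              edge_vert := fun h => H.edge_vert h.1
              symm := ⟨fun a b h => ⟨H.adj_symm h.1, by rw [Sym2.eq_swap]; exact h.2⟩⟩ }, hv, ?_⟩
    · rintro a b ⟨hab, hns⟩
      rcases (SimpleGraph.sup_adj _ _ _ _).mp (H.adj_sub hab) with h | h
      · exact h
      · exact absurd ((SimpleGraph.fromEdgeSet_adj _).mp h).1 hns
    · intro w hw
      have hAdj : ∀ a b, H.Adj a b ∧ s(a, b) ∉ S ↔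
          b ∈ H.neighborSet a \ B a := by
        intro a b; simp [SimpleGraph.Subgraph.mem_neighborSet, hB]
      have hfin : (H.neighborSet w).Finite := Set.toFinite _
      have hIcard : (H.neighborSet w ∩ B w).ncard ≤ D := by
        have hinj : Set.InjOn (fun b => s(w, b)) (H.neighborSet w ∩ B w) := by
          intro a _ b _ hab
          exact (Sym2.congr_right).mp hab
        have himg : (fun b => s(w, b)) '' (H.neighborSet w ∩ B w) ⊆
            {e ∈ S | w ∈ e} := by
          rintro e ⟨b, ⟨_, hbB⟩, rfl⟩
          exact ⟨hbB, Sym2.mem_mk_left _ _⟩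
        calc (H.neighborSet w ∩ B w).ncard
            = ((fun b => s(w, b)) '' (H.neighborSet w ∩ B w)).ncard :=
              (Set.ncard_image_of_injOn hinj).symm
          _ ≤ {e ∈ S | w ∈ e}.ncard := Set.ncard_le_ncard himg (Set.toFinite _)
          _ ≤ D := hD w
      have hsplit : (H.neighborSet w).ncard ≤
          (H.neighborSet w \ B w).ncard + (H.neighborSet w ∩ B w).ncard := by
        rw [← Set.ncard_union_eq]
        · apply Set.ncard_le_ncard _ (Set.toFinite _)
          intro x hx
          by_cases hxB : x ∈ B w
          · exact Or.inr ⟨hx, hxB⟩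
          · exact Or.inl ⟨hx, hxB⟩
        · exact Set.disjoint_sdiff_left.mono_right Set.inter_subset_right
      have hk' : k ≤ (H.neighborSet w \ B w).ncard + D := by
        calc k ≤ (H.neighborSet w).ncard := hdeg w hw
          _ ≤ (H.neighborSet w \ B w).ncard + (H.neighborSet w ∩ B w).ncard := hsplit
          _ ≤ (H.neighborSet w \ B w).ncard + D := by omega
      have : k - D ≤ (H.neighborSet w \ B w).ncard := by omega
      convert this using 2
      ext x; exact hAdj w x
  have : k - D ≤ coreNumber G v := le_csSup hbdd key
  have hk : k ≤ k - D + D := le_tsub_add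
  omega
end
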